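/- arXiv:2510.06725 — 5 statements merged into one kernel-verified Lean document; each statement's English description precedes it below -/
import Mathlib

section
/- If L is an N×K complex matrix with L†L = I_K and A is any N×N matrix satisfying A(LL†) = (LL†)A, then L† exp(A) L = exp(L† A L). -/
open Matrix

attribute [local instance] Matrix.linftyOpNormedRing Matrix.linftyOpNormedAlgebra

set_option maxHeartbeats 1000000 in
/-- If `Lᴴ L = I_K` and `A` commutes with the projector `L Lᴴ`, then
`Lᴴ exp(A) L = exp(Lᴴ A L)`. -/
theorem conj_exp_of_commute_proj {N K : ℕ}
    (L : Matrix (Fin N) (Fin K) ℂ) (A : Matrix (Fin N) (Fin N) ℂ)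
    (hL : Lᴴ * L = 1) (hA : A * (L * Lᴴ) = (L * Lᴴ) * A) :
    Lᴴ * NormedSpace.exp A * L = NormedSpace.exp (Lᴴ * A * L) := by
  have hpow : ∀ n : ℕ, Lᴴ * A ^ n * L = (Lᴴ * A * L) ^ n := by
    intro n
    induction n with
    | zero => simpa using hL
    | succ n ih =>
      have hc : A ^ n * (L * Lᴴ) = (L * Lᴴ) * A ^ n :=
        ((Commute.symm hA).pow_right n).symm
      have key : (Lᴴ * A ^ n * L) * (Lᴴ * A * L) = Lᴴ * A ^ (n + 1) * L := by
        have h1 : Lᴴ * A ^ n * L * (Lᴴ * A * L) = Lᴴ * (A ^ n * (L * Lᴴ)) * (A * L) := by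
          simp only [Matrix.mul_assoc]
        rw [h1, hc, pow_succ]
        simp only [Matrix.mul_assoc]
        rw [← Matrix.mul_assoc Lᴴ L, hL, Matrix.one_mul]
      rw [pow_succ (Lᴴ * A * L) n, ← ih, key]
  -- the continuous linear map X ↦ Lᴴ * X * L
  let f₀ : Matrix (Fin N) (Fin N) ℂ →ₗ[ℂ] Matrix (Fin K) (Fin K) ℂ :=
    { toFun := fun X => Lᴴ * X * L
      map_add' := by intro x y; simp [Matrix.mul_add, Matrix.add_mul]
      map_smul' := by intro c x; simp [Matrix.mul_smul, Matrix.smul_mul] }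
  let f : Matrix (Fin N) (Fin N) ℂ →L[ℂ] Matrix (Fin K) (Fin K) ℂ :=
    ⟨f₀, f₀.continuous_of_finiteDimensional⟩
  have hs : Summable (fun n : ℕ => (n.factorial : ℂ)⁻¹ • A ^ n) :=
    NormedSpace.expSeries_summable' A
  calc Lᴴ * NormedSpace.exp A * L = f (NormedSpace.exp A) := rfl
    _ = f (∑' n : ℕ, (n.factorial : ℂ)⁻¹ • A ^ n) := by
        rw [NormedSpace.exp_eq_tsum ℂ]
    _ = ∑' n : ℕ, f ((n.factorial : ℂ)⁻¹ • A ^ n) := ContinuousLinearMap.map_tsum f hs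
    _ = ∑' n : ℕ, (n.factorial : ℂ)⁻¹ • (Lᴴ * A * L) ^ n := by
        congr 1; funext n
        simp only [f, f₀, ContinuousLinearMap.coe_mk', LinearMap.coe_mk, AddHom.coe_mk,
          Matrix.mul_smul, Matrix.smul_mul]
        rw [hpow]
    _ = NormedSpace.exp (Lᴴ * A * L) := by rw [NormedSpace.exp_eq_tsum ℂ]
end

section
/- Let P be an orthogonal projection on a finite-dimensional Hilbert space and let X, H be operators with P X P = 0 and P (H X) P = 0 and [H, P] = 0. For the unitary V(φ) = exp(i(θφ/2π)H)·exp(iφX) with X² = I and H² = I, the projected generator satisfies P V(φ)† (dV/dφ)(φ) P = i(θ/2π)cos(2φ) H P. -/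
open Matrix

attribute [local instance] Matrix.frobeniusNormedAddCommGroup Matrix.frobeniusNormedSpace

private lemma hasDerivAt_expM {N : ℕ} (M : Matrix (Fin N) (Fin N) ℂ) (φ : ℝ) :
    HasDerivAt (fun s : ℝ => NormedSpace.exp ((s : ℂ) • M))
      (M * NormedSpace.exp ((φ : ℂ) • M)) φ := by
  letI : NormedRing (Matrix (Fin N) (Fin N) ℂ) := Matrix.frobeniusNormedRing
  letI : NormedAlgebra ℂ (Matrix (Fin N) (Fin N) ℂ) := Matrix.frobeniusNormedAlgebra
  have h : HasDerivAt (fun u : ℂ => NormedSpace.exp (u • M))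
      (M * NormedSpace.exp ((φ : ℂ) • M)) (φ : ℂ) :=
    hasDerivAt_exp_smul_const' M (φ : ℂ)
  exact (HasDerivAt.scomp (𝕜 := ℝ) (𝕜' := ℂ) φ h Complex.ofRealCLM.hasDerivAt).congr_deriv (by simp)

private lemma commute_exp_smul {N : ℕ} (M : Matrix (Fin N) (Fin N) ℂ) (z : ℂ) :
    M * NormedSpace.exp (z • M) = NormedSpace.exp (z • M) * M := by
  letI : NormedRing (Matrix (Fin N) (Fin N) ℂ) := Matrix.frobeniusNormedRing
  letI : NormedAlgebra ℂ (Matrix (Fin N) (Fin N) ℂ) := Matrix.frobeniusNormedAlgebra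
  exact (hasDerivAt_exp_smul_const' M z).unique (hasDerivAt_exp_smul_const M z)

private lemma exp_neg_mul_exp {N : ℕ} (M : Matrix (Fin N) (Fin N) ℂ) :
    NormedSpace.exp (-M) * NormedSpace.exp M = 1 := by
  rw [← Matrix.exp_add_of_commute _ _ ((Commute.refl M).neg_left), neg_add_cancel,
    NormedSpace.exp_zero]

/-- Closed form for the exponential of a (complex multiple of an) involution. -/
private lemma exp_smul_involution {N : ℕ} (X : Matrix (Fin N) (Fin N) ℂ)
    (hX2 : X * X = 1) (φ : ℝ) :
    NormedSpace.exp ((φ : ℂ) • (Complex.I • X)) =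
      (Real.cos φ : ℂ) • 1 + (Real.sin φ : ℂ) • (Complex.I • X) := by
  set M : Matrix (Fin N) (Fin N) ℂ := Complex.I • X with hM
  have hM2 : M * M = -1 := by
    simp [hM, smul_mul_assoc, mul_smul_comm, hX2, smul_smul, Complex.I_mul_I]
  set W : ℝ → Matrix (Fin N) (Fin N) ℂ := fun s =>
    (Real.cos s : ℂ) • 1 + (Real.sin s : ℂ) • M with hW
  have hWd : ∀ s : ℝ, HasDerivAt W (M * W s) s := by
    intro s
    have h1 : HasDerivAt (fun t : ℝ => ((Real.cos t : ℂ)) • (1 : Matrix (Fin N) (Fin N) ℂ))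
        (((-Real.sin s : ℝ) : ℂ) • 1) s :=
      ((Real.hasDerivAt_cos s).ofReal_comp).smul_const _
    have h2 : HasDerivAt (fun t : ℝ => ((Real.sin t : ℂ)) • M)
        (((Real.cos s : ℝ) : ℂ) • M) s :=
      ((Real.hasDerivAt_sin s).ofReal_comp).smul_const _
    have h := h1.add h2
    refine h.congr_deriv ?_
    rw [hW]
    simp only [mul_add, mul_smul_comm, mul_one, hM2, smul_neg]
    push_cast
    module
  have hEd : ∀ s : ℝ, HasDerivAt (fun t : ℝ => NormedSpace.exp ((t : ℂ) • (-M)))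
      ((-M) * NormedSpace.exp ((s : ℂ) • (-M))) s := fun s => hasDerivAt_expM (-M) s
  set G : ℝ → Matrix (Fin N) (Fin N) ℂ := fun s =>
    NormedSpace.exp ((s : ℂ) • (-M)) * W s with hG
  have hGd : ∀ s : ℝ, HasDerivAt G 0 s := by
    intro s
    letI : NormedRing (Matrix (Fin N) (Fin N) ℂ) := Matrix.frobeniusNormedRing
    letI : NormedAlgebra ℂ (Matrix (Fin N) (Fin N) ℂ) := Matrix.frobeniusNormedAlgebra
    have h := (hEd s).mul (hWd s)
    refine h.congr_deriv ?_
    have hc : M * NormedSpace.exp ((s : ℂ) • (-M))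
        = NormedSpace.exp ((s : ℂ) • (-M)) * M := by
      have h0 := commute_exp_smul (-M) (s : ℂ)
      simpa [neg_mul, mul_neg, neg_inj] using h0
    rw [neg_mul, ← mul_assoc, ← hc]
    simp [mul_assoc]
  have hconst : ∀ s : ℝ, G s = G 0 :=
    fun s => is_const_of_deriv_eq_zero (fun t => (hGd t).differentiableAt)
      (fun t => (hGd t).deriv) s 0
  have hG0 : G 0 = 1 := by simp [hG, hW, NormedSpace.exp_zero]
  have key : NormedSpace.exp ((φ : ℂ) • (-M)) * W φ = 1 := (hconst φ).trans hG0
  have h2 := congrArg (fun A => NormedSpace.exp ((φ : ℂ) • M) * A) key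
  rw [← mul_assoc, smul_neg,
    ← Matrix.exp_add_of_commute _ _ ((Commute.refl ((φ : ℂ) • M)).neg_right),
    add_neg_cancel, NormedSpace.exp_zero, one_mul, mul_one] at h2
  rw [← h2]

/-- For `V(φ) = e^{i(θφ/2π)H} e^{iφX}` with Hermitian involutions `X, H`,
`{X,H} = 0`, and an orthogonal projector `P` with `[H,P] = 0`, `PXP = 0`,
`P(HX)P = 0`, the projected generator is
`P V(φ)ᴴ V'(φ) P = i(θ/2π)cos(2φ) H P`. -/
theorem projected_generator {N : ℕ} (θ : ℝ)
    (P X H : Matrix (Fin N) (Fin N) ℂ)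
    (hP_herm : Pᴴ = P) (hP_idem : P * P = P)
    (hX_herm : Xᴴ = X) (hH_herm : Hᴴ = H)
    (hX2 : X * X = 1) (hH2 : H * H = 1)
    (hXH : X * H = -(H * X))
    (hHP : H * P = P * H)
    (hPXP : P * X * P = 0) (hPHXP : P * (H * X) * P = 0)
    (V V' : ℝ → Matrix (Fin N) (Fin N) ℂ)
    (hVdef : ∀ φ, V φ =
      NormedSpace.exp ((Complex.I * (θ * φ / (2 * Real.pi))) • H) *
        NormedSpace.exp ((Complex.I * φ) • X))
    (hV' : ∀ φ, HasDerivAt V (V' φ) φ) :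
    ∀ φ : ℝ, P * (V φ)ᴴ * V' φ * P =
      (Complex.I * (θ / (2 * Real.pi)) * Real.cos (2 * φ)) • (H * P) := by
  intro φ
  set c : ℂ := Complex.I * (θ / (2 * Real.pi)) with hc
  set A : Matrix (Fin N) (Fin N) ℂ := c • H with hA
  set B : Matrix (Fin N) (Fin N) ℂ := Complex.I • X with hB
  set EH : Matrix (Fin N) (Fin N) ℂ := NormedSpace.exp ((φ : ℂ) • A) with hEH
  set EX : Matrix (Fin N) (Fin N) ℂ := NormedSpace.exp ((φ : ℂ) • B) with hEX
  set EHm : Matrix (Fin N) (Fin N) ℂ := NormedSpace.exp (-((φ : ℂ) • A)) with hEHm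
  set EXm : Matrix (Fin N) (Fin N) ℂ := NormedSpace.exp (-((φ : ℂ) • B)) with hEXm
  -- V as an explicit function
  have hVfun : V = fun s : ℝ =>
      NormedSpace.exp ((s : ℂ) • A) * NormedSpace.exp ((s : ℂ) • B) := by
    funext s
    rw [hVdef s]
    congr 2
    · rw [hA, smul_smul, hc]; push_cast; ring_nf
    · rw [hB, smul_smul]; ring_nf
  -- derivative of V
  have hD : HasDerivAt V (A * EH * EX + EH * (B * EX)) φ := by
    rw [hVfun]
    letI : NormedRing (Matrix (Fin N) (Fin N) ℂ) := Matrix.frobeniusNormedRing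
    letI : NormedAlgebra ℂ (Matrix (Fin N) (Fin N) ℂ) := Matrix.frobeniusNormedAlgebra
    exact (hasDerivAt_expM A φ).mul (hasDerivAt_expM B φ)
  have hV'φ : V' φ = A * EH * EX + EH * (B * EX) := (hV' φ).unique hD
  -- conjugate transpose of V
  have hBHs : ((φ : ℂ) • B)ᴴ = -((φ : ℂ) • B) := by
    rw [hB, smul_smul, Matrix.conjTranspose_smul, hX_herm, ← neg_smul]
    congr 1
    simp [Complex.ext_iff]
  have hAHs : ((φ : ℂ) • A)ᴴ = -((φ : ℂ) • A) := by
    rw [hA, hc, smul_smul, Matrix.conjTranspose_smul, hH_herm, ← neg_smul]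
    congr 1
    simp [Complex.ext_iff]
  have hVH : (V φ)ᴴ = EXm * EHm := by
    rw [hVfun]
    simp only [conjTranspose_mul]
    congr 1
    · rw [hEXm, ← Matrix.exp_conjTranspose, hBHs]
    · rw [hEHm, ← Matrix.exp_conjTranspose, hAHs]
  -- basic commutation and inversion facts
  have hEHinv : EHm * EH = 1 := exp_neg_mul_exp _
  have hEXinv : EXm * EX = 1 := exp_neg_mul_exp _
  have hcommA : EHm * A = A * EHm := by
    have h0 := commute_exp_smul A (-(φ : ℂ))
    rw [neg_smul] at h0
    rw [hEHm, ← h0]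
  have hcommB : EXm * B = B * EXm := by
    have h0 := commute_exp_smul B (-(φ : ℂ))
    rw [neg_smul] at h0
    rw [hEXm, ← h0]
  have hAm : EHm * A * EH = A := by rw [hcommA, mul_assoc, hEHinv, mul_one]
  have hBm : EXm * (B * EX) = B := by rw [← mul_assoc, hcommB, mul_assoc, hEXinv, mul_one]
  -- H conjugation of EX
  have hHXH : H * X * H = -X := by
    have hHX : H * X = -(X * H) := by
      rw [hXH, neg_neg]
    rw [hHX]
    simp only [neg_mul, mul_assoc, hH2, mul_one]
  have hHEX : H * EX = EXm * H := by
    have hU : IsUnit H := ⟨⟨H, H, hH2, hH2⟩, rfl⟩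
    have hHinv : H⁻¹ = H := inv_eq_right_inv hH2
    have hconj := Matrix.exp_conj H ((φ : ℂ) • B) hU
    rw [hHinv] at hconj
    have harg : H * ((φ : ℂ) • B) * H = -((φ : ℂ) • B) := by
      rw [hB]
      simp only [smul_smul, Matrix.mul_smul, Matrix.smul_mul, hHXH, smul_neg]
    rw [harg] at hconj
    -- hconj : exp (-(φ•B)) = H * EX * H
    rw [hEXm, hconj, mul_assoc, mul_assoc, hH2, mul_one]
  -- the key projected factor
  have hEXmHEX : EXm * (H * EX) =
      ((Real.cos (2 * φ) : ℂ)) • H - ((Real.sin (2 * φ) : ℂ)) • (B * H) := by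
    rw [hHEX, ← mul_assoc]
    have hEXm2 : EXm * EXm = NormedSpace.exp (((-(2 * φ) : ℝ) : ℂ) • B) := by
      rw [hEXm, ← Matrix.exp_add_of_commute _ _
        (((Commute.refl ((φ : ℂ) • B)).neg_left).neg_right)]
      congr 1
      push_cast
      module
    rw [hEXm2, exp_smul_involution X hX2 (-(2 * φ))]
    rw [Real.cos_neg, Real.sin_neg]
    push_cast
    rw [Matrix.add_mul, Matrix.smul_mul, Matrix.smul_mul, one_mul, neg_smul, sub_eq_add_neg]
  -- assemble the middle product
  have hMid : (EXm * EHm) * (A * EH * EX + EH * (B * EX)) = c • (EXm * (H * EX)) + B := by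
    rw [mul_add]
    congr 1
    · have step1 : (EXm * EHm) * (A * EH * EX) = EXm * (EHm * A * EH) * EX := by
        simp only [mul_assoc]
      rw [step1, hAm, hA, Matrix.mul_smul, Matrix.smul_mul, mul_assoc]
    · have step2 : (EXm * EHm) * (EH * (B * EX)) = EXm * ((EHm * EH) * (B * EX)) := by
        simp only [mul_assoc]
      rw [step2, hEHinv, one_mul, hBm]
  -- projections
  have hPHP : P * H * P = H * P := by
    rw [show P * H = H * P from hHP.symm, mul_assoc, hP_idem]
  have hPXHP : P * (X * H) * P = 0 := by
    rw [hXH]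
    simp only [Matrix.mul_neg, Matrix.neg_mul, hPHXP, neg_zero]
  have hPBHP : P * (B * H) * P = 0 := by
    rw [hB, Matrix.smul_mul, Matrix.mul_smul, Matrix.smul_mul, hPXHP, smul_zero]
  have hPBP : P * B * P = 0 := by
    rw [hB, Matrix.mul_smul, Matrix.smul_mul, hPXP, smul_zero]
  -- final computation
  have hfinal : P * (V φ)ᴴ * V' φ * P =
      P * (c • (EXm * (H * EX)) + B) * P := by
    rw [hV'φ, hVH, mul_assoc P (EXm * EHm), ← hMid, ← mul_assoc]
  rw [hfinal, hEXmHEX]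
  rw [Matrix.mul_add, Matrix.add_mul, Matrix.mul_smul, Matrix.smul_mul]
  rw [Matrix.mul_sub, Matrix.sub_mul, Matrix.mul_smul, Matrix.mul_smul,
    Matrix.smul_mul, Matrix.smul_mul, hPHP, hPBHP, hPBP, smul_zero, sub_zero, add_zero]
  rw [smul_smul, hc]
end

section
/- Let X, H be Hermitian involutions on a finite-dimensional Hilbert space with {X, H} = 0, and let P₀ be an orthogonal projector with [H, P₀] = 0, P₀XP₀ = 0, P₀XHP₀ = 0. With V(φ) = e^{i(θφ/2π)H}e^{iφX}, for all φ and δ: P₀ V(φ)† V(φ−δ) P₀ = [cos((θ/2π)δ)cos(δ) I − i sin((θ/2π)δ)cos(2φ−δ) H] P₀. -/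
open Matrix

/-- Exponential of `(i a) • X` for an involution `X`. -/
lemma exp_I_real_smul_involution {N : ℕ} (X : Matrix (Fin N) (Fin N) ℂ)
    (hX2 : X * X = 1) (a : ℝ) :
    NormedSpace.exp ((Complex.I * (a : ℂ)) • X) =
      ((Real.cos a : ℂ)) • (1 : Matrix (Fin N) (Fin N) ℂ) +
        (Complex.I * (Real.sin a : ℂ)) • X := by
  have hX2' : X ^ 2 = 1 := by rw [sq]; exact hX2
  rw [NormedSpace.exp_eq_tsum (𝕂 := ℂ)]
  refine HasSum.tsum_eq ?_
  refine HasSum.even_add_odd ?_ ?_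
  · have h := (Complex.hasSum_cos (a : ℂ)).smul_const (1 : Matrix (Fin N) (Fin N) ℂ)
    rw [← Complex.ofReal_cos] at h
    convert h using 2 with k
    · rfl
    rw [smul_pow, pow_mul X 2 k, hX2', one_pow, smul_smul]
    congr 1
    rw [mul_pow, pow_mul Complex.I 2 k, Complex.I_sq]
    push_cast
    field_simp
  · have h := ((Complex.hasSum_sin (a : ℂ)).mul_left Complex.I).smul_const X
    rw [← Complex.ofReal_sin] at h
    convert h using 2 with k
    · rfl
    rw [smul_pow, pow_succ X (2 * k), pow_mul X 2 k, hX2', one_pow, one_mul, smul_smul]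
    congr 1
    rw [pow_succ (Complex.I * (a:ℂ)) (2 * k), mul_pow, pow_mul Complex.I 2 k, Complex.I_sq]
    push_cast
    field_simp
    ring

/-- conjTranspose of `r•1 + (I s)•M` for Hermitian `M`, real `r s`. -/
lemma ct_aux {N : ℕ} (M : Matrix (Fin N) (Fin N) ℂ) (hM : Mᴴ = M) (r s : ℝ) :
    (((r : ℂ)) • (1 : Matrix (Fin N) (Fin N) ℂ) + (Complex.I * (s : ℂ)) • M)ᴴ =
      ((r : ℂ)) • (1 : Matrix (Fin N) (Fin N) ℂ) + (-(Complex.I * (s : ℂ))) • M := by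
  rw [conjTranspose_add, conjTranspose_smul, conjTranspose_smul, conjTranspose_one, hM]
  congr 1
  · congr 1
    simp [Complex.star_def, Complex.conj_ofReal]
  · congr 1
    simp [Complex.star_def, _root_.map_mul, Complex.conj_I, Complex.conj_ofReal]

lemma sandwich_aux {N : ℕ} (P₀ X H : Matrix (Fin N) (Fin N) ℂ)
    (hP_idem : P₀ * P₀ = P₀)
    (hX2 : X * X = 1) (hH2 : H * H = 1)
    (hXH : X * H = -(H * X))
    (hHP : H * P₀ = P₀ * H)
    (hPXP : P₀ * X * P₀ = 0) (hPXHP : P₀ * (X * H) * P₀ = 0)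
    (p q r u v w x y : ℂ) :
    P₀ * ((p • (1 : Matrix (Fin N) (Fin N) ℂ) + q • X) * (r • 1 + u • H)) *
        ((v • (1 : Matrix (Fin N) (Fin N) ℂ) + w • H) * (x • 1 + y • X)) * P₀ =
      ((p * x + q * y) * (r * v + u * w)) • P₀ +
        ((p * x - q * y) * (u * v + r * w)) • (H * P₀) := by
  have hXXm : ∀ M : Matrix (Fin N) (Fin N) ℂ, X * (X * M) = M := fun M => by
    rw [← mul_assoc, hX2, one_mul]
  have hHHm : ∀ M : Matrix (Fin N) (Fin N) ℂ, H * (H * M) = M := fun M => by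
    rw [← mul_assoc, hH2, one_mul]
  have hHX : H * X = -(X * H) := by rw [hXH, neg_neg]
  have hHXm : ∀ M : Matrix (Fin N) (Fin N) ℂ, H * (X * M) = -(X * (H * M)) := fun M => by
    rw [← mul_assoc, hHX, neg_mul, mul_assoc]
  have hPP : P₀ * P₀ = P₀ := hP_idem
  have hPHP : P₀ * (H * P₀) = H * P₀ := by
    rw [← mul_assoc, ← hHP, mul_assoc, hPP]
  have hPXP' : P₀ * (X * P₀) = 0 := by rw [← mul_assoc]; exact hPXP
  have hPXHP' : P₀ * (X * (H * P₀)) = 0 := by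
    have : P₀ * (X * H) * P₀ = P₀ * (X * (H * P₀)) := by
      rw [mul_assoc, mul_assoc]
    rw [← this, hPXHP]
  simp only [mul_add, add_mul, smul_mul_assoc, mul_smul_comm, mul_one, one_mul,
    smul_smul, mul_assoc]
  simp only [hHXm, hXXm, hHHm, mul_neg, smul_neg, neg_neg]
  simp only [hPP, hPHP, hPXP', hPXHP', smul_zero]
  module

/-- Exact form of the sandwiched small-rotation operator (Lemma 1):
`P₀ V(φ)ᴴ V(φ−δ) P₀ = [cos((θ/2π)δ)cos δ · I − i sin((θ/2π)δ)cos(2φ−δ) · H] P₀`. -/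
theorem sandwiched_rotation_code_block {N : ℕ} (θ : ℝ)
    (P₀ X H : Matrix (Fin N) (Fin N) ℂ)
    (hP_herm : P₀ᴴ = P₀) (hP_idem : P₀ * P₀ = P₀)
    (hX_herm : Xᴴ = X) (hH_herm : Hᴴ = H)
    (hX2 : X * X = 1) (hH2 : H * H = 1)
    (hXH : X * H = -(H * X))
    (hHP : H * P₀ = P₀ * H)
    (hPXP : P₀ * X * P₀ = 0) (hPXHP : P₀ * (X * H) * P₀ = 0)
    (V : ℝ → Matrix (Fin N) (Fin N) ℂ)
    (hVdef : ∀ φ, V φ =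
      NormedSpace.exp ((Complex.I * (θ * φ / (2 * Real.pi))) • H) *
        NormedSpace.exp ((Complex.I * φ) • X)) :
    ∀ φ δ : ℝ, P₀ * (V φ)ᴴ * V (φ - δ) * P₀ =
      ((Real.cos (θ / (2 * Real.pi) * δ) * Real.cos δ : ℝ) : ℂ) • P₀ -
        (Complex.I * ((Real.sin (θ / (2 * Real.pi) * δ) *
          Real.cos (2 * φ - δ) : ℝ) : ℂ)) • (H * P₀) := by
  intro φ δ
  have hca : (Complex.I * ((θ : ℂ) * (φ : ℂ) / (2 * (Real.pi : ℂ)))) =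
      Complex.I * ((θ * φ / (2 * Real.pi) : ℝ) : ℂ) := by push_cast; ring
  have hcb : (Complex.I * ((θ : ℂ) * ((φ - δ : ℝ) : ℂ) / (2 * (Real.pi : ℂ)))) =
      Complex.I * ((θ * (φ - δ) / (2 * Real.pi) : ℝ) : ℂ) := by push_cast; ring
  rw [hVdef φ, hVdef (φ - δ), hca, hcb,
    exp_I_real_smul_involution H hH2 (θ * φ / (2 * Real.pi)),
    exp_I_real_smul_involution H hH2 (θ * (φ - δ) / (2 * Real.pi)),
    exp_I_real_smul_involution X hX2 φ,
    exp_I_real_smul_involution X hX2 (φ - δ),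
    conjTranspose_mul, ct_aux H hH_herm, ct_aux X hX_herm]
  rw [sandwich_aux P₀ X H hP_idem hX2 hH2 hXH hHP hPXP hPXHP]
  -- now a scalar identity
  have h1 : ((Real.cos (θ / (2 * Real.pi) * δ) : ℝ) : ℂ) =
      ((Real.cos (θ * φ / (2 * Real.pi)) : ℝ) : ℂ) *
        ((Real.cos (θ * (φ - δ) / (2 * Real.pi)) : ℝ) : ℂ) +
      ((Real.sin (θ * φ / (2 * Real.pi)) : ℝ) : ℂ) *
        ((Real.sin (θ * (φ - δ) / (2 * Real.pi)) : ℝ) : ℂ) := by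
    have : Real.cos (θ / (2 * Real.pi) * δ) =
        Real.cos (θ * φ / (2 * Real.pi)) * Real.cos (θ * (φ - δ) / (2 * Real.pi)) +
          Real.sin (θ * φ / (2 * Real.pi)) * Real.sin (θ * (φ - δ) / (2 * Real.pi)) := by
      rw [← Real.cos_sub]
      congr 1
      ring
    exact_mod_cast this
  have h2 : ((Real.cos δ : ℝ) : ℂ) =
      ((Real.cos φ : ℝ) : ℂ) * ((Real.cos (φ - δ) : ℝ) : ℂ) +
        ((Real.sin φ : ℝ) : ℂ) * ((Real.sin (φ - δ) : ℝ) : ℂ) := by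
    have : Real.cos δ = Real.cos φ * Real.cos (φ - δ) +
        Real.sin φ * Real.sin (φ - δ) := by
      rw [← Real.cos_sub]; congr 1; ring
    exact_mod_cast this
  have h3 : ((Real.cos (2 * φ - δ) : ℝ) : ℂ) =
      ((Real.cos φ : ℝ) : ℂ) * ((Real.cos (φ - δ) : ℝ) : ℂ) -
        ((Real.sin φ : ℝ) : ℂ) * ((Real.sin (φ - δ) : ℝ) : ℂ) := by
    have : Real.cos (2 * φ - δ) = Real.cos φ * Real.cos (φ - δ) -
        Real.sin φ * Real.sin (φ - δ) := by
      rw [← Real.cos_add]; congr 1; ring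
    exact_mod_cast this
  have h4 : ((Real.sin (θ / (2 * Real.pi) * δ) : ℝ) : ℂ) =
      ((Real.sin (θ * φ / (2 * Real.pi)) : ℝ) : ℂ) *
        ((Real.cos (θ * (φ - δ) / (2 * Real.pi)) : ℝ) : ℂ) -
      ((Real.cos (θ * φ / (2 * Real.pi)) : ℝ) : ℂ) *
        ((Real.sin (θ * (φ - δ) / (2 * Real.pi)) : ℝ) : ℂ) := by
    have : Real.sin (θ / (2 * Real.pi) * δ) =
        Real.sin (θ * φ / (2 * Real.pi)) * Real.cos (θ * (φ - δ) / (2 * Real.pi)) -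
          Real.cos (θ * φ / (2 * Real.pi)) * Real.sin (θ * (φ - δ) / (2 * Real.pi)) := by
      rw [← Real.sin_sub]; congr 1; ring
    exact_mod_cast this
  rw [Complex.ofReal_mul, Complex.ofReal_mul, h1, h2, h3, h4]
  have hI : ∀ s t : ℝ, (-(Complex.I * (s : ℂ))) * (Complex.I * (t : ℂ)) =
      ((s : ℂ) * (t : ℂ)) := by
    intro s t
    rw [neg_mul, mul_mul_mul_comm, Complex.I_mul_I]
    ring
  rw [hI, hI]
  match_scalars <;> ring
end

section
/- Under the same hypotheses, the complementary projection satisfies (I − P₀) V(φ)† V(φ−δ) P₀ = [sin((θ/2π)δ)sin(2φ−δ) HX − i cos((θ/2π)δ)sin(δ) X] P₀. -/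
open Matrix


lemma exp_smul_of_involution {𝔸 : Type*} [NormedRing 𝔸] [NormedAlgebra ℂ 𝔸]
    [CompleteSpace 𝔸] (A : 𝔸) (hA : A * A = 1) (t : ℝ) :
    NormedSpace.exp ((Complex.I * (t : ℂ)) • A)
      = ((Real.cos t : ℂ)) • (1 : 𝔸) + (Complex.I * (Real.sin t : ℂ)) • A := by
  rw [NormedSpace.exp_eq_tsum (𝕂 := ℂ)]
  refine HasSum.tsum_eq ?_
  have hA2 : A ^ 2 = 1 := by rw [sq, hA]
  have heven : ∀ k : ℕ, A ^ (2 * k) = 1 := fun k => by rw [pow_mul, hA2, one_pow]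
  have hodd : ∀ k : ℕ, A ^ (2 * k + 1) = A := fun k => by
    rw [pow_succ, heven, one_mul]
  have hc := (Complex.hasSum_cos' (t : ℂ)).smul_const (1 : 𝔸)
  have hs := ((Complex.hasSum_sin' (t : ℂ)).mul_left Complex.I).smul_const A
  rw [Complex.ofReal_cos, Complex.ofReal_sin]
  refine HasSum.even_add_odd ?_ ?_
  · convert hc using 2 with k
    rw [smul_pow, heven, smul_smul]
    congr 1
    have : ((2 * k).factorial : ℂ) ≠ 0 := by exact_mod_cast (Nat.factorial_ne_zero _)
    field_simp
  · convert hs using 2 with k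
    rw [smul_pow, hodd, smul_smul]
    congr 1
    rw [Complex.div_I]
    have : ((2 * k + 1).factorial : ℂ) ≠ 0 := by exact_mod_cast (Nat.factorial_ne_zero _)
    field_simp
    ring_nf
    rw [show (Complex.I ^ 3 = -Complex.I) from by
      rw [pow_succ, Complex.I_sq]; ring]
    ring

lemma matrix_exp_invol {N : ℕ} (A : Matrix (Fin N) (Fin N) ℂ) (hA : A * A = 1) (t : ℝ) :
    NormedSpace.exp ((Complex.I * (t : ℂ)) • A)
      = ((Real.cos t : ℂ)) • (1 : Matrix (Fin N) (Fin N) ℂ)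
        + (Complex.I * (Real.sin t : ℂ)) • A := by
  letI : SeminormedRing (Matrix (Fin N) (Fin N) ℂ) := Matrix.linftyOpSemiNormedRing
  letI : NormedRing (Matrix (Fin N) (Fin N) ℂ) := Matrix.linftyOpNormedRing
  letI : NormedAlgebra ℂ (Matrix (Fin N) (Fin N) ℂ) := Matrix.linftyOpNormedAlgebra
  exact exp_smul_of_involution A hA t

lemma key_sandwich {N : ℕ} (P₀ X H : Matrix (Fin N) (Fin N) ℂ)
    (hP_idem : P₀ * P₀ = P₀)
    (hX2 : X * X = 1) (hH2 : H * H = 1)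
    (hXH : X * H = -(H * X))
    (hHP : H * P₀ = P₀ * H)
    (hPXP : P₀ * X * P₀ = 0)
    (c1 d1 c2 d2 c2' d2' c3 d3 : ℂ) :
    (1 - P₀) * ((c1 • 1 + d1 • X) * (c2 • 1 + d2 • H))
        * ((c2' • 1 + d2' • H) * (c3 • 1 + d3 • X)) * P₀
      = ((c1 * d3 + d1 * c3) * (c2 * c2' + d2 * d2')) • (X * P₀)
        + ((c1 * d3 - d1 * c3) * (c2 * d2' + d2 * c2')) • (H * X * P₀) := by
  have hXX : ∀ M : Matrix (Fin N) (Fin N) ℂ, X * (X * M) = M := fun M => by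
    rw [← mul_assoc, hX2, one_mul]
  have hHH : ∀ M : Matrix (Fin N) (Fin N) ℂ, H * (H * M) = M := fun M => by
    rw [← mul_assoc, hH2, one_mul]
  have hXHm : ∀ M : Matrix (Fin N) (Fin N) ℂ, X * (H * M) = -(H * (X * M)) := fun M => by
    rw [← mul_assoc, hXH, ← mul_assoc]; simp
  have hM : (c1 • 1 + d1 • X) * (c2 • 1 + d2 • H)
        * ((c2' • 1 + d2' • H) * (c3 • 1 + d3 • X))
      = (c1 * c3 * (c2 * c2' + d2 * d2') + d1 * d3 * (c2 * c2' + d2 * d2')) • 1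
        + ((c1 * d3 + d1 * c3) * (c2 * c2' + d2 * d2')) • X
        + ((c1 * c3 - d1 * d3) * (c2 * d2' + d2 * c2')) • H
        + ((c1 * d3 - d1 * c3) * (c2 * d2' + d2 * c2')) • (H * X) := by
    simp only [mul_add, add_mul, smul_mul_assoc, mul_smul_comm, smul_smul, one_mul, mul_one,
      mul_assoc, hXX, hHH, hXHm, hX2, hH2, hXH, smul_neg, mul_neg, neg_mul]
    match_scalars <;> ring
  rw [mul_assoc ((1 - P₀)), hM]
  have hPH : P₀ * (H * P₀) = H * P₀ := by
    rw [← mul_assoc, ← hHP, mul_assoc, hP_idem]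
  have hPXP' : P₀ * (X * P₀) = 0 := by rw [← mul_assoc, hPXP]
  have hPHXP : P₀ * (H * (X * P₀)) = 0 := by
    rw [← mul_assoc, ← hHP, mul_assoc, hPXP']; simp
  simp only [sub_mul, one_mul, add_mul, smul_mul_assoc, mul_add, mul_smul_comm, one_mul,
    mul_assoc, hP_idem, hPH, hPXP', hPHXP, smul_zero]
  match_scalars <;> ring

/-- Complementary block of the sandwiched small-rotation operator:
`(I − P₀) V(φ)ᴴ V(φ−δ) P₀
  = [sin((θ/2π)δ)sin(2φ−δ) HX − i cos((θ/2π)δ)sin δ · X] P₀`. -/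
theorem sandwiched_rotation_error_block {N : ℕ} (θ : ℝ)
    (P₀ X H : Matrix (Fin N) (Fin N) ℂ)
    (hP_herm : P₀ᴴ = P₀) (hP_idem : P₀ * P₀ = P₀)
    (hX_herm : Xᴴ = X) (hH_herm : Hᴴ = H)
    (hX2 : X * X = 1) (hH2 : H * H = 1)
    (hXH : X * H = -(H * X))
    (hHP : H * P₀ = P₀ * H)
    (hPXP : P₀ * X * P₀ = 0) (hPXHP : P₀ * (X * H) * P₀ = 0)
    (hXorth : (1 - P₀) * X * P₀ = X * P₀)
    (V : ℝ → Matrix (Fin N) (Fin N) ℂ)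
    (hVdef : ∀ φ, V φ =
      NormedSpace.exp ((Complex.I * (θ * φ / (2 * Real.pi))) • H) *
        NormedSpace.exp ((Complex.I * φ) • X)) :
    ∀ φ δ : ℝ, (1 - P₀) * (V φ)ᴴ * V (φ - δ) * P₀ =
      ((Real.sin (θ / (2 * Real.pi) * δ) * Real.sin (2 * φ - δ) : ℝ) : ℂ) •
          (H * X * P₀) -
        (Complex.I * ((Real.cos (θ / (2 * Real.pi) * δ) * Real.sin δ : ℝ) : ℂ)) •
          (X * P₀) := by
  intro φ δ
  have h1 : NormedSpace.exp ((Complex.I * ((θ : ℂ) * (φ : ℂ) / (2 * (Real.pi : ℂ)))) • H)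
      = ((Real.cos (θ * φ / (2 * Real.pi)) : ℂ)) • 1
        + (Complex.I * (Real.sin (θ * φ / (2 * Real.pi)) : ℂ)) • H := by
    rw [show ((θ : ℂ) * (φ : ℂ) / (2 * (Real.pi : ℂ)))
        = ((θ * φ / (2 * Real.pi) : ℝ) : ℂ) from by push_cast; ring,
      matrix_exp_invol H hH2]
  have h1' : NormedSpace.exp ((Complex.I * ((θ : ℂ) * ((φ - δ : ℝ) : ℂ) / (2 * (Real.pi : ℂ)))) • H)
      = ((Real.cos (θ * (φ - δ) / (2 * Real.pi)) : ℂ)) • 1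
        + (Complex.I * (Real.sin (θ * (φ - δ) / (2 * Real.pi)) : ℂ)) • H := by
    rw [show ((θ : ℂ) * ((φ - δ : ℝ) : ℂ) / (2 * (Real.pi : ℂ)))
        = ((θ * (φ - δ) / (2 * Real.pi) : ℝ) : ℂ) from by push_cast; ring,
      matrix_exp_invol H hH2]
  rw [hVdef φ, hVdef (φ - δ), h1, h1', matrix_exp_invol X hX2 φ, matrix_exp_invol X hX2 (φ - δ)]
  simp only [conjTranspose_mul, conjTranspose_add, conjTranspose_smul, conjTranspose_one,
    hX_herm, hH_herm, Complex.star_def, _root_.map_mul, Complex.conj_I, Complex.conj_ofReal]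
  rw [key_sandwich P₀ X H hP_idem hX2 hH2 hXH hHP hPXP]
  have hIe : ∀ x y : ℂ, -Complex.I * x * (Complex.I * y) = x * y := fun x y => by
    linear_combination (-x * y) * Complex.I_mul_I
  rw [hIe]
  have hc1 : Complex.cos ↑φ * Complex.sin (↑φ - ↑δ) - Complex.sin ↑φ * Complex.cos (↑φ - ↑δ)
      = -Complex.sin ↑δ := by
    have h := Complex.sin_sub ((φ : ℂ) - ↑δ) ↑φ
    rw [show ((φ : ℂ) - ↑δ - ↑φ) = -↑δ by ring, Complex.sin_neg] at h
    linear_combination -h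
  have hc2 : Complex.cos (↑θ * ↑φ / (2 * ↑Real.pi)) * Complex.cos (↑θ * (↑φ - ↑δ) / (2 * ↑Real.pi))
      + Complex.sin (↑θ * ↑φ / (2 * ↑Real.pi)) * Complex.sin (↑θ * (↑φ - ↑δ) / (2 * ↑Real.pi))
      = Complex.cos (↑θ / (2 * ↑Real.pi) * ↑δ) := by
    have h := Complex.cos_sub ((θ : ℂ) * ↑φ / (2 * ↑Real.pi)) ((θ : ℂ) * (↑φ - ↑δ) / (2 * ↑Real.pi))
    rw [show ((θ : ℂ) * ↑φ / (2 * ↑Real.pi) - (θ : ℂ) * (↑φ - ↑δ) / (2 * ↑Real.pi))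
        = ↑θ / (2 * ↑Real.pi) * ↑δ by ring] at h
    linear_combination -h
  have hc3 : Complex.cos ↑φ * Complex.sin (↑φ - ↑δ) + Complex.sin ↑φ * Complex.cos (↑φ - ↑δ)
      = Complex.sin (2 * ↑φ - ↑δ) := by
    have h := Complex.sin_add (φ : ℂ) (↑φ - ↑δ)
    rw [show ((φ : ℂ) + (↑φ - ↑δ)) = 2 * ↑φ - ↑δ by ring] at h
    linear_combination -h
  have hc4 : Complex.cos (↑θ * ↑φ / (2 * ↑Real.pi)) * Complex.sin (↑θ * (↑φ - ↑δ) / (2 * ↑Real.pi))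
      - Complex.sin (↑θ * ↑φ / (2 * ↑Real.pi)) * Complex.cos (↑θ * (↑φ - ↑δ) / (2 * ↑Real.pi))
      = -Complex.sin (↑θ / (2 * ↑Real.pi) * ↑δ) := by
    have h := Complex.sin_sub ((θ : ℂ) * (↑φ - ↑δ) / (2 * ↑Real.pi)) ((θ : ℂ) * ↑φ / (2 * ↑Real.pi))
    rw [show ((θ : ℂ) * (↑φ - ↑δ) / (2 * ↑Real.pi) - (θ : ℂ) * ↑φ / (2 * ↑Real.pi))
        = -(↑θ / (2 * ↑Real.pi) * ↑δ) by ring, Complex.sin_neg] at h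
    linear_combination -h
  match_scalars
  · linear_combination (Complex.I * (Complex.cos (↑θ * ↑φ / (2 * ↑Real.pi)) * Complex.cos (↑θ * (↑φ - ↑δ) / (2 * ↑Real.pi)) + Complex.sin (↑θ * ↑φ / (2 * ↑Real.pi)) * Complex.sin (↑θ * (↑φ - ↑δ) / (2 * ↑Real.pi)))) * hc1 - (Complex.I * Complex.sin ↑δ) * hc2
  · linear_combination (Complex.I * Complex.I * (Complex.cos (↑θ * ↑φ / (2 * ↑Real.pi)) * Complex.sin (↑θ * (↑φ - ↑δ) / (2 * ↑Real.pi)) - Complex.sin (↑θ * ↑φ / (2 * ↑Real.pi)) * Complex.cos (↑θ * (↑φ - ↑δ) / (2 * ↑Real.pi)))) * hc3 + (Complex.I * Complex.I * Complex.sin (2 * ↑φ - ↑δ)) * hc4 - (Complex.sin (2 * ↑φ - ↑δ) * Complex.sin (↑θ / (2 * ↑Real.pi) * ↑δ)) * Complex.I_mul_I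
end

section
/- Let X and H be Hermitian involutions with {X,H} = 0 and V(φ) = e^{i(θφ/2π)H}e^{iφX}. For a Hermitian involution g with {g, X} = 0 and [g, H] = 0, the rotated operator satisfies V(φ) g V(φ)† = cos(2φ)·g − sin(2φ)sin((θ/π)φ)·HXg + i sin(2φ)cos((θ/π)φ)·Xg, and this operator squares to the identity. -/
set_option maxHeartbeats 1000000


open Matrix

lemma exp_involution {N : ℕ} (t : ℝ) (A : Matrix (Fin N) (Fin N) ℂ) (hA : A * A = 1) :
    NormedSpace.exp ((Complex.I * t) • A) =
      ((Real.cos t : ℂ)) • (1 : Matrix (Fin N) (Fin N) ℂ) + (Complex.I * Real.sin t) • A := by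
  have hAe : ∀ k : ℕ, A ^ (2 * k) = 1 := by
    intro k
    rw [pow_mul, pow_two, hA, one_pow]
  have hAo : ∀ k : ℕ, A ^ (2 * k + 1) = A := by
    intro k
    rw [pow_succ, hAe, one_mul]
  rw [NormedSpace.exp_eq_tsum (𝕂 := ℂ)]
  have he : HasSum (fun k : ℕ => ((((2 * k).factorial : ℂ))⁻¹) • ((Complex.I * t) • A) ^ (2 * k))
      (((Real.cos t : ℂ)) • (1 : Matrix (Fin N) (Fin N) ℂ)) := by
    have h1 := (Complex.hasSum_cos (t : ℂ)).smul_const (1 : Matrix (Fin N) (Fin N) ℂ)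
    rw [show Complex.cos (t : ℂ) = ((Real.cos t : ℂ)) by rw [← Complex.ofReal_cos]] at h1
    convert h1 using 2 with k
    rw [smul_pow, hAe, smul_smul]
    congr 1
    rw [mul_pow, pow_mul, Complex.I_sq]
    field_simp
    try ring
  have ho : HasSum (fun k : ℕ => ((((2 * k + 1).factorial : ℂ))⁻¹) • ((Complex.I * t) • A) ^ (2 * k + 1))
      ((Complex.I * Real.sin t) • A) := by
    have h1 := ((Complex.hasSum_sin (t : ℂ)).mul_left Complex.I).smul_const A
    rw [show Complex.sin (t : ℂ) = ((Real.sin t : ℂ)) by rw [← Complex.ofReal_sin]] at h1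
    convert h1 using 2 with k
    rw [smul_pow, hAo, smul_smul]
    congr 1
    rw [mul_pow, pow_succ, pow_mul, Complex.I_sq]
    field_simp
    try ring
  have hall : HasSum (fun n : ℕ => (((n.factorial : ℂ))⁻¹) • ((Complex.I * (t : ℂ)) • A) ^ n)
      (((Real.cos t : ℂ)) • (1 : Matrix (Fin N) (Fin N) ℂ) + (Complex.I * Real.sin t) • A) :=
    HasSum.even_add_odd he ho
  exact hall.tsum_eq

lemma conj_anticomm {N : ℕ} (c s : ℂ)
    (A M : Matrix (Fin N) (Fin N) ℂ) (hA2 : A * A = 1) (hMA : M * A = -(A * M)) :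
    (c • (1 : Matrix (Fin N) (Fin N) ℂ) + (Complex.I * s) • A) * M *
      (c • (1 : Matrix (Fin N) (Fin N) ℂ) - (Complex.I * s) • A) =
      (c * c - s * s) • M + (Complex.I * (2 * c * s)) • (A * M) := by
  have hAMA : A * M * A = -M := by
    rw [Matrix.mul_assoc, hMA, Matrix.mul_neg, ← Matrix.mul_assoc, hA2, Matrix.one_mul]
  simp only [Matrix.add_mul, Matrix.mul_add, Matrix.mul_sub, Matrix.sub_mul,
    Matrix.smul_mul, Matrix.mul_smul, Matrix.one_mul, Matrix.mul_one, smul_smul]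
  rw [hMA, hAMA]
  match_scalars
  · linear_combination (s * s) * Complex.I_mul_I
  · ring

lemma conj_comm' {N : ℕ} (c s : ℂ) (hcs : c * c + s * s = 1)
    (A M : Matrix (Fin N) (Fin N) ℂ) (hA2 : A * A = 1) (hMA : M * A = A * M) :
    (c • (1 : Matrix (Fin N) (Fin N) ℂ) + (Complex.I * s) • A) * M *
      (c • (1 : Matrix (Fin N) (Fin N) ℂ) - (Complex.I * s) • A) = M := by
  have hAMA : A * M * A = M := by
    rw [Matrix.mul_assoc, hMA, ← Matrix.mul_assoc, hA2, Matrix.one_mul]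
  simp only [Matrix.add_mul, Matrix.mul_add, Matrix.mul_sub, Matrix.sub_mul,
    Matrix.smul_mul, Matrix.mul_smul, Matrix.one_mul, Matrix.mul_one, smul_smul]
  rw [hMA, hAMA]
  match_scalars
  · linear_combination hcs - (s * s) * Complex.I_mul_I
  · ring

lemma unit_mul {N : ℕ} (c s : ℂ) (hcs : c * c + s * s = 1)
    (A : Matrix (Fin N) (Fin N) ℂ) (hA2 : A * A = 1) :
    (c • (1 : Matrix (Fin N) (Fin N) ℂ) + (Complex.I * s) • A) *
      (c • (1 : Matrix (Fin N) (Fin N) ℂ) - (Complex.I * s) • A) = 1 := by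
  simp only [Matrix.add_mul, Matrix.mul_add, Matrix.mul_sub, Matrix.sub_mul,
    Matrix.smul_mul, Matrix.mul_smul, Matrix.one_mul, Matrix.mul_one, smul_smul, hA2]
  match_scalars
  · linear_combination hcs - (s * s) * Complex.I_mul_I
  · ring

lemma unit_mul' {N : ℕ} (c s : ℂ) (hcs : c * c + s * s = 1)
    (A : Matrix (Fin N) (Fin N) ℂ) (hA2 : A * A = 1) :
    (c • (1 : Matrix (Fin N) (Fin N) ℂ) - (Complex.I * s) • A) *
      (c • (1 : Matrix (Fin N) (Fin N) ℂ) + (Complex.I * s) • A) = 1 := by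
  simp only [Matrix.add_mul, Matrix.mul_add, Matrix.mul_sub, Matrix.sub_mul,
    Matrix.smul_mul, Matrix.mul_smul, Matrix.one_mul, Matrix.mul_one, smul_smul, hA2]
  match_scalars
  · linear_combination hcs - (s * s) * Complex.I_mul_I
  · ring

lemma ct_closed {N : ℕ} (c s : ℝ) (A : Matrix (Fin N) (Fin N) ℂ) (hA : Aᴴ = A) :
    (((c : ℂ)) • (1 : Matrix (Fin N) (Fin N) ℂ) + (Complex.I * (s : ℂ)) • A)ᴴ =
      ((c : ℂ)) • (1 : Matrix (Fin N) (Fin N) ℂ) - (Complex.I * (s : ℂ)) • A := by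
  rw [Matrix.conjTranspose_add, Matrix.conjTranspose_smul, Matrix.conjTranspose_smul,
    Matrix.conjTranspose_one, hA]
  have h1 : star ((c : ℂ)) = ((c : ℂ)) := by
    simp [Complex.star_def, Complex.conj_ofReal]
  have h2 : star (Complex.I * (s : ℂ)) = -(Complex.I * (s : ℂ)) := by
    simp [Complex.star_def, _root_.map_mul, Complex.conj_I, Complex.conj_ofReal]
    try ring
  rw [h1, h2]
  module

/-- Conjugation of a stabilizer `g` (with `{g,X} = 0`, `[g,H] = 0`) by
`V(φ) = e^{i(θφ/2π)H} e^{iφX}`: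
`V g Vᴴ = cos(2φ)·g − sin(2φ)sin((θ/π)φ)·HXg + i sin(2φ)cos((θ/π)φ)·Xg`,
and the result squares to the identity. -/
theorem rotated_stabilizer_formula {N : ℕ} (θ : ℝ)
    (g X H : Matrix (Fin N) (Fin N) ℂ)
    (hg_herm : gᴴ = g) (hX_herm : Xᴴ = X) (hH_herm : Hᴴ = H)
    (hg2 : g * g = 1) (hX2 : X * X = 1) (hH2 : H * H = 1)
    (hgX : g * X = -(X * g)) (hgH : g * H = H * g)
    (hXH : X * H = -(H * X))
    (V : ℝ → Matrix (Fin N) (Fin N) ℂ)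
    (hVdef : ∀ φ, V φ =
      NormedSpace.exp ((Complex.I * (θ * φ / (2 * Real.pi))) • H) *
        NormedSpace.exp ((Complex.I * φ) • X)) :
    ∀ φ : ℝ,
      (V φ * g * (V φ)ᴴ =
        ((Real.cos (2 * φ) : ℝ) : ℂ) • g -
          ((Real.sin (2 * φ) * Real.sin (θ / Real.pi * φ) : ℝ) : ℂ) •
            (H * X * g) +
          (Complex.I * ((Real.sin (2 * φ) * Real.cos (θ / Real.pi * φ) : ℝ) : ℂ)) •
            (X * g)) ∧
      (V φ * g * (V φ)ᴴ) * (V φ * g * (V φ)ᴴ) = 1 := by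
  intro φ
  set a : ℝ := θ * φ / (2 * Real.pi) with ha
  have hcast : ((θ : ℂ) * (φ : ℂ) / (2 * (Real.pi : ℂ))) = ((a : ℝ) : ℂ) := by
    rw [ha]; push_cast; ring
  have hV : V φ = (((Real.cos a : ℂ)) • (1 : Matrix (Fin N) (Fin N) ℂ)
        + (Complex.I * (Real.sin a : ℂ)) • H) *
      (((Real.cos φ : ℂ)) • (1 : Matrix (Fin N) (Fin N) ℂ)
        + (Complex.I * (Real.sin φ : ℂ)) • X) := by
    rw [hVdef φ, hcast, exp_involution a H hH2, exp_involution φ X hX2]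
  have hVH : (V φ)ᴴ = (((Real.cos φ : ℂ)) • (1 : Matrix (Fin N) (Fin N) ℂ)
        - (Complex.I * (Real.sin φ : ℂ)) • X) *
      (((Real.cos a : ℂ)) • (1 : Matrix (Fin N) (Fin N) ℂ)
        - (Complex.I * (Real.sin a : ℂ)) • H) := by
    rw [hV, Matrix.conjTranspose_mul, ct_closed _ _ _ hX_herm, ct_closed _ _ _ hH_herm]
  have hcs1 : ((Real.cos a : ℂ)) * ((Real.cos a : ℂ)) +
      ((Real.sin a : ℂ)) * ((Real.sin a : ℂ)) = 1 := by
    have h : Real.cos a * Real.cos a + Real.sin a * Real.sin a = 1 := by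
      nlinarith [Real.sin_sq_add_cos_sq a]
    exact_mod_cast h
  have hcs2 : ((Real.cos φ : ℂ)) * ((Real.cos φ : ℂ)) +
      ((Real.sin φ : ℂ)) * ((Real.sin φ : ℂ)) = 1 := by
    have h : Real.cos φ * Real.cos φ + Real.sin φ * Real.sin φ = 1 := by
      nlinarith [Real.sin_sq_add_cos_sq φ]
    exact_mod_cast h
  -- anticommutation of X*g with H
  have hXgH : (X * g) * H = -(H * (X * g)) := by
    calc (X * g) * H = X * (g * H) := by rw [Matrix.mul_assoc]
    _ = X * (H * g) := by rw [hgH]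
    _ = (X * H) * g := by rw [Matrix.mul_assoc]
    _ = (-(H * X)) * g := by rw [hXH]
    _ = -(H * (X * g)) := by rw [Matrix.neg_mul, Matrix.mul_assoc]
  -- the main formula
  have key : V φ * g * (V φ)ᴴ =
      (((Real.cos φ : ℂ)) * ((Real.cos φ : ℂ)) - ((Real.sin φ : ℂ)) * ((Real.sin φ : ℂ))) • g +
      (Complex.I * (2 * ((Real.cos φ : ℂ)) * ((Real.sin φ : ℂ)))) •
        ((((Real.cos a : ℂ)) * ((Real.cos a : ℂ)) -
            ((Real.sin a : ℂ)) * ((Real.sin a : ℂ))) • (X * g) +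
          (Complex.I * (2 * ((Real.cos a : ℂ)) * ((Real.sin a : ℂ)))) • (H * (X * g))) := by
    rw [hVH, hV]
    have assoc : ∀ (U1 U2 W1 W2 : Matrix (Fin N) (Fin N) ℂ),
        U1 * U2 * g * (W2 * W1) = U1 * (U2 * g * W2) * W1 := by
      intro U1 U2 W1 W2
      simp only [Matrix.mul_assoc]
    rw [assoc]
    rw [conj_anticomm _ _ X g hX2 hgX]
    rw [Matrix.mul_add, Matrix.add_mul, Matrix.mul_smul, Matrix.smul_mul,
      Matrix.mul_smul, Matrix.smul_mul]
    rw [show ∀ (U W M : Matrix (Fin N) (Fin N) ℂ), U * M * W = U * M * W from fun _ _ _ => rfl]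
    rw [conj_comm' _ _ hcs1 H g hH2 hgH]
    rw [conj_anticomm _ _ H (X * g) hH2 hXgH]
  constructor
  · rw [key]
    have h2a : θ / Real.pi * φ = 2 * a := by
      rw [ha]
      field_simp
    rw [h2a]
    have e1 : Real.cos (2 * φ) = Real.cos φ * Real.cos φ - Real.sin φ * Real.sin φ := by
      rw [Real.cos_two_mul']; ring
    have e2 : Real.sin (2 * φ) = 2 * Real.sin φ * Real.cos φ := Real.sin_two_mul φ
    have e3 : Real.cos (2 * a) = Real.cos a * Real.cos a - Real.sin a * Real.sin a := by
      rw [Real.cos_two_mul']; ring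
    have e4 : Real.sin (2 * a) = 2 * Real.sin a * Real.cos a := Real.sin_two_mul a
    rw [e1, e2, e3, e4]
    simp only [Complex.ofReal_mul, Complex.ofReal_sub, Complex.ofReal_ofNat,
      Complex.ofReal_sin, Complex.ofReal_cos]
    rw [Matrix.mul_assoc H X g]
    match_scalars
    · ring
    · ring
    · linear_combination (4 * Complex.sin (φ : ℂ) * Complex.cos (φ : ℂ) *
        Complex.sin (a : ℂ) * Complex.cos (a : ℂ)) * Complex.I_mul_I
  · have hVV : V φ * (V φ)ᴴ = 1 := by
      rw [hVH, hV]
      calc _ = (((Real.cos a : ℂ)) • (1 : Matrix (Fin N) (Fin N) ℂ)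
            + (Complex.I * (Real.sin a : ℂ)) • H) *
          ((((Real.cos φ : ℂ)) • (1 : Matrix (Fin N) (Fin N) ℂ)
            + (Complex.I * (Real.sin φ : ℂ)) • X) *
          (((Real.cos φ : ℂ)) • (1 : Matrix (Fin N) (Fin N) ℂ)
            - (Complex.I * (Real.sin φ : ℂ)) • X)) *
          (((Real.cos a : ℂ)) • (1 : Matrix (Fin N) (Fin N) ℂ)
            - (Complex.I * (Real.sin a : ℂ)) • H) := by
            simp only [Matrix.mul_assoc]
      _ = 1 := by
        rw [unit_mul _ _ hcs2 X hX2, Matrix.mul_one, unit_mul _ _ hcs1 H hH2]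
    have hVV' : (V φ)ᴴ * V φ = 1 := by
      rw [hVH, hV]
      calc _ = (((Real.cos φ : ℂ)) • (1 : Matrix (Fin N) (Fin N) ℂ)
            - (Complex.I * (Real.sin φ : ℂ)) • X) *
          ((((Real.cos a : ℂ)) • (1 : Matrix (Fin N) (Fin N) ℂ)
            - (Complex.I * (Real.sin a : ℂ)) • H) *
          (((Real.cos a : ℂ)) • (1 : Matrix (Fin N) (Fin N) ℂ)
            + (Complex.I * (Real.sin a : ℂ)) • H)) *
          (((Real.cos φ : ℂ)) • (1 : Matrix (Fin N) (Fin N) ℂ)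
            + (Complex.I * (Real.sin φ : ℂ)) • X) := by
            simp only [Matrix.mul_assoc]
      _ = 1 := by
        rw [unit_mul' _ _ hcs1 H hH2, Matrix.mul_one, unit_mul' _ _ hcs2 X hX2]
    calc V φ * g * (V φ)ᴴ * (V φ * g * (V φ)ᴴ)
        = V φ * g * ((V φ)ᴴ * V φ) * g * (V φ)ᴴ := by simp only [Matrix.mul_assoc]
      _ = V φ * (g * g) * (V φ)ᴴ := by rw [hVV', Matrix.mul_one]; simp only [Matrix.mul_assoc]
      _ = V φ * (V φ)ᴴ := by rw [hg2, Matrix.mul_one]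
      _ = 1 := hVV
end
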